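/- For every λ > 0, the function Φ^{1,λ}(t,y) := (1/(2√2·y)) · exp(λ²/2) · ∫_{(y−λ)²/(2(1−t))}^{(y+λ)²/(2(1−t))} e^{−u} u^{−1/2} du, defined for t ∈ (0,1) and y > 0, satisfies the partial differential equation (1/2)·∂²_{yy}Φ^{1,λ}(t,y) + (1/y)·∂_y Φ^{1,λ}(t,y) + ∂_t Φ^{1,λ}(t,y) = 0 for all t ∈ (0,1) and y > 0 with y ≠ λ. -/

import Mathlib

open Real
open MeasureTheory intervalIntegral

/-- `Φ^{1,λ}(t,y)`. -/
noncomputable def Phi1 (lam t y : ℝ) : ℝ :=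
  1 / (2 * Real.sqrt 2 * y) * Real.exp (lam ^ 2 / 2) *
    ∫ u in (y - lam) ^ 2 / (2 * (1 - t))..(y + lam) ^ 2 / (2 * (1 - t)),
      Real.exp (-u) / Real.sqrt u

noncomputable def Fint (x : ℝ) : ℝ := ∫ u in (1:ℝ)..x, Real.exp (-u) / Real.sqrt u

lemma g_meas : Measurable (fun u : ℝ => Real.exp (-u) / Real.sqrt u) :=
  (Real.measurable_exp.comp measurable_neg).div Real.continuous_sqrt.measurable

lemma g_contOn : ContinuousOn (fun u : ℝ => Real.exp (-u) / Real.sqrt u) (Set.Ioi 0) := by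
  apply ContinuousOn.div
  · exact (Real.continuous_exp.comp continuous_neg).continuousOn
  · exact Real.continuous_sqrt.continuousOn
  · intro x hx
    exact ne_of_gt (Real.sqrt_pos.2 hx)

lemma g_intble {a b : ℝ} (ha : 0 < a) (hb : 0 < b) :
    IntervalIntegrable (fun u : ℝ => Real.exp (-u) / Real.sqrt u) volume a b := by
  apply ContinuousOn.intervalIntegrable
  apply g_contOn.mono
  intro x hx
  simp only [Set.mem_Ioi]
  exact lt_of_lt_of_le (lt_min ha hb) hx.1

lemma Fint_hasDeriv {x : ℝ} (hx : 0 < x) :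
    HasDerivAt Fint (Real.exp (-x) / Real.sqrt x) x :=
  intervalIntegral.integral_hasDerivAt_right (g_intble one_pos hx)
    g_meas.aestronglyMeasurable.stronglyMeasurableAtFilter
    (g_contOn.continuousAt (Ioi_mem_nhds hx))

lemma Fint_split {a b : ℝ} (ha : 0 < a) (hb : 0 < b) :
    ∫ u in a..b, Real.exp (-u) / Real.sqrt u = Fint b - Fint a := by
  have h := intervalIntegral.integral_add_adjacent_intervals (g_intble one_pos ha) (g_intble ha hb)
  unfold Fint
  linarith

noncomputable def Qf (lam τ : ℝ) (w : ℝ) : ℝ :=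
  Real.exp (lam^2/2)/(2*Real.sqrt 2)/w *
    (Fint ((w+lam)^2/(2*(1-τ))) - Fint ((w-lam)^2/(2*(1-τ))))

lemma phi_eq_Q (lam τ w : ℝ) (hlam : 0 < lam) (hτ : τ < 1) (hw : 0 < w) (hwl : w ≠ lam) :
    Phi1 lam τ w = Qf lam τ w := by
  have hs : 0 < 1 - τ := by linarith
  have hA : 0 < (w - lam)^2/(2*(1-τ)) := by
    apply div_pos _ (by linarith)
    have : w - lam ≠ 0 := sub_ne_zero.2 hwl
    positivity
  have hB : 0 < (w + lam)^2/(2*(1-τ)) := by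
    have : 0 < w + lam := by linarith
    positivity
  unfold Phi1 Qf
  rw [Fint_split hA hB]
  ring

noncomputable def D1f (lam t ε : ℝ) (w : ℝ) : ℝ :=
  -(Real.exp (lam^2/2)/(2*Real.sqrt 2))/w^2 *
    (Fint ((w+lam)^2/(2*(1-t))) - Fint ((w-lam)^2/(2*(1-t)))) +
  Real.exp (lam^2/2)/(2*Real.sqrt 2)/w *
    (Real.sqrt (2*(1-t))/(1-t) *
      (Real.exp (-((w+lam)^2/(2*(1-t)))) - ε * Real.exp (-((w-lam)^2/(2*(1-t))))))

lemma div_aux (a b c r : ℝ) (hb : b ≠ 0) : a / (b/r) * (b/c) = r/c * a := by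
  rcases eq_or_ne r 0 with rfl | hr
  · simp
  rcases eq_or_ne c 0 with rfl | hc
  · simp
  field_simp

lemma div_aux2 (a b c r ε : ℝ) (hb : ε*b ≠ 0) (hε : ε = 1 ∨ ε = -1) :
    a / ((ε*b)/r) * (b/c) = ε * (r/c) * a := by
  rcases hε with rfl | rfl
  · simpa using div_aux a b c r (by simpa using hb)
  · have hb' : b ≠ 0 := by simpa using hb
    have h : a / ((-1*b)/r) * (b/c) = -(a / (b/r) * (b/c)) := by
      rw [neg_one_mul, neg_div, div_neg, neg_mul]
    rw [h, div_aux a b c r hb']; ring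

section calc1
variable {lam t ε w : ℝ}

lemma hs' (ht : t ∈ Set.Ioo (0:ℝ) 1) : 0 < 1 - t := by
  have := ht.2; linarith

lemma hApos (ht : t ∈ Set.Ioo (0:ℝ) 1) (hU2 : 0 < ε * (w - lam)) :
    0 < (w - lam)^2/(2*(1-t)) := by
  have hs := hs' ht
  have hne : w - lam ≠ 0 := by
    intro h; rw [h, mul_zero] at hU2; exact lt_irrefl 0 hU2
  positivity

lemma hBpos (ht : t ∈ Set.Ioo (0:ℝ) 1) (hlam : 0 < lam) (hw : 0 < w) :
    0 < (w + lam)^2/(2*(1-t)) := by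
  have hs := hs' ht
  have : 0 < w + lam := by linarith
  positivity

lemma sqA (ht : t ∈ Set.Ioo (0:ℝ) 1) (hε : ε = 1 ∨ ε = -1) (hU2 : 0 < ε * (w - lam)) :
    Real.sqrt ((w - lam)^2/(2*(1-t))) = ε*(w-lam)/Real.sqrt (2*(1-t)) := by
  have hs := hs' ht
  have hr : 0 < Real.sqrt (2*(1-t)) := Real.sqrt_pos.2 (by linarith)
  have hr2 : Real.sqrt (2*(1-t))^2 = 2*(1-t) := Real.sq_sqrt (by linarith)
  have key : (ε*(w-lam)/Real.sqrt (2*(1-t)))^2 = (w - lam)^2/(2*(1-t)) := by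
    rw [div_pow, mul_pow, hr2]
    rcases hε with rfl | rfl <;> norm_num
  rw [← key, Real.sqrt_sq (div_pos hU2 hr).le]

lemma sqB (ht : t ∈ Set.Ioo (0:ℝ) 1) (hlam : 0 < lam) (hw : 0 < w) :
    Real.sqrt ((w + lam)^2/(2*(1-t))) = (w+lam)/Real.sqrt (2*(1-t)) := by
  have hs := hs' ht
  have hr : 0 < Real.sqrt (2*(1-t)) := Real.sqrt_pos.2 (by linarith)
  have hr2 : Real.sqrt (2*(1-t))^2 = 2*(1-t) := Real.sq_sqrt (by linarith)
  have key : ((w+lam)/Real.sqrt (2*(1-t)))^2 = (w + lam)^2/(2*(1-t)) := by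
    rw [div_pow, hr2]
  rw [← key, Real.sqrt_sq (by positivity)]

lemma hA' (w : ℝ) : HasDerivAt (fun w => (w - lam)^2/(2*(1-t))) ((w - lam)/(1-t)) w := by
  have h := (((hasDerivAt_id w).sub_const lam).pow 2).div_const (2*(1-t))
  refine h.congr_deriv (Eq.symm ?_)
  rcases eq_or_ne (1 - t) 0 with h0 | h0
  · simp [h0]
  · field_simp
    simp only [id_eq]
    ring

lemma hB' (w : ℝ) : HasDerivAt (fun w => (w + lam)^2/(2*(1-t))) ((w + lam)/(1-t)) w := by
  have h := (((hasDerivAt_id w).add_const lam).pow 2).div_const (2*(1-t))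
  refine h.congr_deriv (Eq.symm ?_)
  rcases eq_or_ne (1 - t) 0 with h0 | h0
  · simp [h0]
  · field_simp
    simp only [id_eq]
    ring

lemma hDiff (ht : t ∈ Set.Ioo (0:ℝ) 1) (hlam : 0 < lam) (hw : 0 < w)
    (hε : ε = 1 ∨ ε = -1) (hU2 : 0 < ε * (w - lam)) :
    HasDerivAt (fun w => Fint ((w+lam)^2/(2*(1-t))) - Fint ((w-lam)^2/(2*(1-t))))
      (Real.sqrt (2*(1-t))/(1-t) *
        (Real.exp (-((w+lam)^2/(2*(1-t)))) - ε * Real.exp (-((w-lam)^2/(2*(1-t)))))) w := by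
  have hs := hs' ht
  have hr : 0 < Real.sqrt (2*(1-t)) := Real.sqrt_pos.2 (by linarith)
  have hwl : w - lam ≠ 0 := by
    intro h; rw [h, mul_zero] at hU2; exact lt_irrefl 0 hU2
  have hwpl : (0:ℝ) < w + lam := by linarith
  have h1 := (Fint_hasDeriv (hBpos ht hlam hw)).comp w (hB' w)
  have h2 := (Fint_hasDeriv (hApos ht hU2)).comp w (hA' w)
  have h := h1.sub h2
  refine h.congr_deriv (Eq.symm ?_)
  rw [sqA ht hε hU2, sqB ht hlam hw]
  rw [div_aux _ (w+lam) (1-t) _ (ne_of_gt hwpl),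
    div_aux2 _ (w-lam) (1-t) _ ε (ne_of_gt hU2) hε]
  ring

end calc1

lemma div_aux3 (a b c r : ℝ) (hb : b ≠ 0) : a / (b/r) * (b^2/c) = r/c * a * b := by
  rw [show a / (b/r) * (b^2/c) = a / (b/r) * (b/c) * b by ring, div_aux a b c r hb]

lemma div_aux4 (a b c r ε : ℝ) (hb : ε*b ≠ 0) (hε : ε = 1 ∨ ε = -1) :
    a / ((ε*b)/r) * (b^2/c) = ε * (r/c * a * b) := by
  rcases hε with rfl | rfl
  · simpa using div_aux3 a b c r (by simpa using hb)
  · have hb' : b ≠ 0 := by simpa using hb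
    have h : a / ((-1*b)/r) * (b^2/c) = -(a / (b/r) * (b^2/c)) := by
      rw [neg_one_mul, neg_div, div_neg, neg_mul]
    rw [h, div_aux3 a b c r hb']; ring

section calc2
variable {lam t ε w y : ℝ}

lemma hQderiv (ht : t ∈ Set.Ioo (0:ℝ) 1) (hlam : 0 < lam) (hw : 0 < w)
    (hε : ε = 1 ∨ ε = -1) (hU2 : 0 < ε * (w - lam)) :
    HasDerivAt (Qf lam t) (D1f lam t ε w) w := by
  have hC : HasDerivAt (fun w : ℝ => Real.exp (lam^2/2)/(2*Real.sqrt 2)/w)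
      (-(Real.exp (lam^2/2)/(2*Real.sqrt 2))/w^2) w := by
    have h := (hasDerivAt_const w (Real.exp (lam^2/2)/(2*Real.sqrt 2))).div
      (hasDerivAt_id w) (ne_of_gt hw)
    refine h.congr_deriv (Eq.symm ?_)
    field_simp
    simp [id_eq, hw.ne']
    field_simp
  have h := hC.mul (hDiff ht hlam hw hε hU2)
  unfold Qf D1f
  exact h

lemma hD2 (ht : t ∈ Set.Ioo (0:ℝ) 1) (hlam : 0 < lam) (hy : 0 < y)
    (hε : ε = 1 ∨ ε = -1) (hU2 : 0 < ε * (y - lam)) :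
    HasDerivAt (D1f lam t ε)
      (2*(Real.exp (lam^2/2)/(2*Real.sqrt 2))/y^3 *
        (Fint ((y+lam)^2/(2*(1-t))) - Fint ((y-lam)^2/(2*(1-t))))
       + -(Real.exp (lam^2/2)/(2*Real.sqrt 2))/y^2 *
        (Real.sqrt (2*(1-t))/(1-t) *
          (Real.exp (-((y+lam)^2/(2*(1-t)))) - ε * Real.exp (-((y-lam)^2/(2*(1-t))))))
       + (-(Real.exp (lam^2/2)/(2*Real.sqrt 2))/y^2 *
        (Real.sqrt (2*(1-t))/(1-t) *
          (Real.exp (-((y+lam)^2/(2*(1-t)))) - ε * Real.exp (-((y-lam)^2/(2*(1-t))))))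
       + Real.exp (lam^2/2)/(2*Real.sqrt 2)/y *
        (Real.sqrt (2*(1-t))/(1-t) *
          (Real.exp (-((y+lam)^2/(2*(1-t)))) * (-((y+lam)/(1-t)))
           - ε * (Real.exp (-((y-lam)^2/(2*(1-t)))) * (-((y-lam)/(1-t)))))))) y := by
  have hf1 : HasDerivAt (fun w : ℝ => -(Real.exp (lam^2/2)/(2*Real.sqrt 2))/w^2)
      (2*(Real.exp (lam^2/2)/(2*Real.sqrt 2))/y^3) y := by
    have h := (hasDerivAt_const y (-(Real.exp (lam^2/2)/(2*Real.sqrt 2)))).div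
      (hasDerivAt_pow 2 y) (pow_ne_zero 2 (ne_of_gt hy))
    refine h.congr_deriv (Eq.symm ?_)
    field_simp
    ring
  have hf2 := hDiff ht hlam hy hε hU2
  have hf3 : HasDerivAt (fun w : ℝ => Real.exp (lam^2/2)/(2*Real.sqrt 2)/w)
      (-(Real.exp (lam^2/2)/(2*Real.sqrt 2))/y^2) y := by
    have h := (hasDerivAt_const y (Real.exp (lam^2/2)/(2*Real.sqrt 2))).div
      (hasDerivAt_id y) (ne_of_gt hy)
    refine h.congr_deriv (Eq.symm ?_)
    field_simp
    simp [id_eq, hy.ne']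
    field_simp
  have hXd : HasDerivAt (fun w : ℝ => Real.exp (-((w+lam)^2/(2*(1-t)))))
      (Real.exp (-((y+lam)^2/(2*(1-t)))) * (-((y+lam)/(1-t)))) y := ((hB' y).neg).exp
  have hYd : HasDerivAt (fun w : ℝ => Real.exp (-((w-lam)^2/(2*(1-t)))))
      (Real.exp (-((y-lam)^2/(2*(1-t)))) * (-((y-lam)/(1-t)))) y := ((hA' y).neg).exp
  have hf4 := (hXd.sub (hYd.const_mul ε)).const_mul (Real.sqrt (2*(1-t))/(1-t))
  have h := (hf1.mul hf2).add (hf3.mul hf4)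
  unfold D1f
  exact h

lemma hDt (ht : t ∈ Set.Ioo (0:ℝ) 1) (hlam : 0 < lam) (hy : 0 < y)
    (hε : ε = 1 ∨ ε = -1) (hU2 : 0 < ε * (y - lam)) :
    HasDerivAt (fun τ => Qf lam τ y)
      (Real.exp (lam^2/2)/(2*Real.sqrt 2)/y *
        (Real.sqrt (2*(1-t))/(2*(1-t)^2) *
          ((y+lam) * Real.exp (-((y+lam)^2/(2*(1-t))))
           - ε * ((y-lam) * Real.exp (-((y-lam)^2/(2*(1-t)))))))) t := by
  have hs := hs' ht
  have hwl : ε * (y - lam) ≠ 0 := ne_of_gt hU2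
  have hwpl : (0:ℝ) < y + lam := by linarith
  have hden : HasDerivAt (fun τ : ℝ => 2*(1-τ)) (-2) t := by
    have h := ((hasDerivAt_id t).const_sub 1).const_mul (2:ℝ)
    refine h.congr_deriv (Eq.symm ?_)
    norm_num
  have hb : HasDerivAt (fun τ : ℝ => (y+lam)^2/(2*(1-τ))) ((y+lam)^2/(2*(1-t)^2)) t := by
    have h := (hasDerivAt_const t ((y+lam)^2)).div hden (by positivity)
    refine h.congr_deriv (Eq.symm ?_)
    field_simp
    ring
  have ha : HasDerivAt (fun τ : ℝ => (y-lam)^2/(2*(1-τ))) ((y-lam)^2/(2*(1-t)^2)) t := by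
    have h := (hasDerivAt_const t ((y-lam)^2)).div hden (by positivity)
    refine h.congr_deriv (Eq.symm ?_)
    field_simp
    ring
  have hFb := (Fint_hasDeriv (hBpos ht hlam hy)).comp t hb
  have hFa := (Fint_hasDeriv (hApos ht hU2)).comp t ha
  have h := (hFb.sub hFa).const_mul (Real.exp (lam^2/2)/(2*Real.sqrt 2)/y)
  unfold Qf
  refine h.congr_deriv (Eq.symm ?_)
  rw [sqA ht hε hU2, sqB ht hlam hy]
  rw [div_aux3 _ (y+lam) (2*(1-t)^2) _ (ne_of_gt hwpl),
    div_aux4 _ (y-lam) (2*(1-t)^2) _ ε hwl hε]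
  ring

end calc2

lemma main_calc (lam t y ε : ℝ) (hlam : 0 < lam) (ht : t ∈ Set.Ioo (0:ℝ) 1) (hy : 0 < y)
    {U : Set ℝ} (hUo : IsOpen U) (hyU : y ∈ U)
    (hU1 : ∀ w ∈ U, 0 < w) (hU2 : ∀ w ∈ U, 0 < ε * (w - lam))
    (hε : ε = 1 ∨ ε = -1) :
    (1 / 2) * deriv (fun z => deriv (fun w => Phi1 lam t w) z) y +
      (1 / y) * deriv (fun w => Phi1 lam t w) y +
      deriv (fun s => Phi1 lam s y) t = 0 := by
  have hs := hs' ht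
  have hne : ∀ w ∈ U, w ≠ lam := by
    intro w hw h
    have h2 := hU2 w hw
    rw [h] at h2; simp at h2
  have hPQ : ∀ w ∈ U, (fun w => Phi1 lam t w) =ᶠ[nhds w] Qf lam t := by
    intro w hw
    filter_upwards [hUo.mem_nhds hw] with v hv
    exact phi_eq_Q lam t v hlam (by linarith [ht.2]) (hU1 v hv) (hne v hv)
  have hd1 : Set.EqOn (deriv (fun w => Phi1 lam t w)) (D1f lam t ε) U := by
    intro w hw
    rw [(hPQ w hw).deriv_eq]
    exact (hQderiv ht hlam (hU1 w hw) hε (hU2 w hw)).deriv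
  have hev : deriv (fun w => Phi1 lam t w) =ᶠ[nhds y] D1f lam t ε := by
    filter_upwards [hUo.mem_nhds hyU] with v hv using hd1 hv
  have hevt : (fun τ => Phi1 lam τ y) =ᶠ[nhds t] (fun τ => Qf lam τ y) := by
    filter_upwards [Iio_mem_nhds ht.2] with τ hτ
    exact phi_eq_Q lam τ y hlam hτ hy (hne y hyU)
  rw [hev.deriv_eq, (hD2 ht hlam hy hε (hU2 y hyU)).deriv, hd1 hyU,
    hevt.deriv_eq, (hDt ht hlam hy hε (hU2 y hyU)).deriv]
  unfold D1f
  have h2 : Real.sqrt 2 ≠ 0 := by positivity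
  have hsne : (1:ℝ) - t ≠ 0 := ne_of_gt hs
  have hyne : y ≠ 0 := ne_of_gt hy
  field_simp
  ring

/-- `Φ^{1,λ}` solves the backward equation of the three dimensional
Bessel process away from the line `y = λ`:
`(1/2)∂²_{yy}Φ¹ + (1/y)∂_yΦ¹ + ∂_tΦ¹ = 0` for `t ∈ (0,1)`, `y > 0`, `y ≠ λ`. -/
theorem Phi1_pde (lam : ℝ) (hlam : 0 < lam) (t : ℝ) (ht : t ∈ Set.Ioo (0 : ℝ) 1)
    (y : ℝ) (hy : 0 < y) (hylam : y ≠ lam) :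
    (1 / 2) * deriv (fun z => deriv (fun w => Phi1 lam t w) z) y +
      (1 / y) * deriv (fun w => Phi1 lam t w) y +
      deriv (fun s => Phi1 lam s y) t = 0 := by
  rcases lt_or_gt_of_ne hylam with h | h
  · exact main_calc lam t y (-1) hlam ht hy isOpen_Ioo (Set.mem_Ioo.mpr ⟨hy, h⟩)
      (fun w hw => hw.1) (fun w hw => by nlinarith [hw.2]) (Or.inr rfl)
  · exact main_calc lam t y 1 hlam ht hy isOpen_Ioi h (fun w hw => lt_trans hlam hw)
      (fun w hw => by rw [one_mul]; exact sub_pos.2 hw) (Or.inl rfl)
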